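/- For every v_N ∈ X_N satisfying b(v_N, q_N) = g(q_N) for all q_N ∈ Y_N, and for every q_N ∈ Y_N, the error in the Lagrange multiplier satisfies ‖p - p_N‖_Y ≤ [1 + (γ_b/β_N)·(1 + √(γ_a/α_a))]·‖p - q_N‖_Y + 2·(γ_a/β_N)·‖u - v_N‖_X. -/

import Mathlib

theorem stmt1
  {X Y : Type*} [NormedAddCommGroup X] [InnerProductSpace ℝ X] [FiniteDimensional ℝ X]
  [NormedAddCommGroup Y] [InnerProductSpace ℝ Y] [FiniteDimensional ℝ Y]
  (a : X →ₗ[ℝ] X →ₗ[ℝ] ℝ) (b : X →ₗ[ℝ] Y →ₗ[ℝ] ℝ)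
  (ha_symm : ∀ w v : X, a w v = a v w)
  (αa γa : ℝ) (hαa : 0 < αa) (hγa : 0 < γa)
  (ha_coer : ∀ v : X, αa * ‖v‖ ^ 2 ≤ a v v)
  (ha_cont : ∀ w v : X, a w v ≤ γa * ‖w‖ * ‖v‖)
  (γb : ℝ) (hγb : 0 < γb)
  (hb_cont : ∀ (v : X) (q : Y), b v q ≤ γb * ‖v‖ * ‖q‖)
  (f : X →ₗ[ℝ] ℝ) (g : Y →ₗ[ℝ] ℝ)
  (u : X) (p : Y)
  (htruth1 : ∀ v : X, a u v + b v p = f v)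
  (htruth2 : ∀ q : Y, b u q = g q)
  (XN : Submodule ℝ X) (YN : Submodule ℝ Y)
  (uN : X) (pN : Y) (huN : uN ∈ XN) (hpN : pN ∈ YN)
  (hrb1 : ∀ v ∈ XN, a uN v + b v pN = f v)
  (hrb2 : ∀ q ∈ YN, b uN q = g q)
  (βN : ℝ) (hβN : 0 < βN)
  (hinfsupN : ∀ q ∈ YN, βN * ‖q‖ ≤ ⨆ v : {v : X // v ∈ XN ∧ v ≠ 0}, b v.1 q / ‖v.1‖)
  (vN : X) (hvN : vN ∈ XN) (hvN_g : ∀ q ∈ YN, b vN q = g q)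
  (qN : Y) (hqN : qN ∈ YN) :
    ‖p - pN‖ ≤ (1 + (γb / βN) * (1 + Real.sqrt (γa / αa))) * ‖p - qN‖ + 2 * (γa / βN) * ‖u - vN‖ := by
  -- nonnegativity of the diagonal
  have hpos : ∀ v : X, (0:ℝ) ≤ a v v := fun v =>
    le_trans (by positivity) (ha_coer v)
  -- Cauchy–Schwarz for a
  have acs : ∀ x y : X, a x y ≤ Real.sqrt (a x x) * Real.sqrt (a y y) := by
    intro x y
    by_cases hy : y = 0
    · simp [hy]
    · have hyy : 0 < a y y := by
        have hny : 0 < ‖y‖ := norm_pos_iff.mpr hy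
        have h1 : 0 < αa * ‖y‖ ^ 2 := mul_pos hαa (pow_pos hny 2)
        exact lt_of_lt_of_le h1 (ha_coer y)
      set c := a x y with hc
      set d := a y y with hd
      have h0 : 0 ≤ a (d • x - c • y) (d • x - c • y) := hpos _
      have hexp : a (d • x - c • y) (d • x - c • y)
          = d * (d * a x x - c * c) := by
        simp only [map_sub, map_smul, LinearMap.sub_apply, LinearMap.smul_apply,
          smul_eq_mul]
        rw [ha_symm y x]
        ring
      rw [hexp] at h0
      have hsq : c ^ 2 ≤ a x x * d := by nlinarith
      calc c ≤ |c| := le_abs_self c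
        _ = Real.sqrt (c ^ 2) := (Real.sqrt_sq_eq_abs c).symm
        _ ≤ Real.sqrt (a x x * d) := Real.sqrt_le_sqrt hsq
        _ = Real.sqrt (a x x) * Real.sqrt d := Real.sqrt_mul (hpos x) d
  -- diagonal bounds in energy norm
  have hdiag : ∀ v : X, Real.sqrt (a v v) ≤ Real.sqrt γa * ‖v‖ := by
    intro v
    have h1 : a v v ≤ γa * (‖v‖ * ‖v‖) := by
      have := ha_cont v v; linarith
    calc Real.sqrt (a v v) ≤ Real.sqrt (γa * (‖v‖ * ‖v‖)) := Real.sqrt_le_sqrt h1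
      _ = Real.sqrt γa * ‖v‖ := by
          rw [Real.sqrt_mul hγa.le, Real.sqrt_mul_self (norm_nonneg v)]
  set w := uN - vN with hw
  have hwXN : w ∈ XN := sub_mem huN hvN
  -- b w q = 0 for q ∈ YN
  have hbw0 : ∀ q ∈ YN, b w q = 0 := by
    intro q hq
    have h1 := hrb2 q hq
    have h2 := hvN_g q hq
    simp only [hw, map_sub, LinearMap.sub_apply]
    linarith
  -- key identity : for v ∈ XN, a (uN - u) v = b v (p - pN)
  have key : ∀ v ∈ XN, a uN v - a u v = b v p - b v pN := by
    intro v hv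
    have h1 := htruth1 v
    have h2 := hrb1 v hv
    linarith
  set t := Real.sqrt (a w w) with ht
  have ht0 : 0 ≤ t := Real.sqrt_nonneg _
  have htsq : t * t = a w w := Real.mul_self_sqrt (hpos w)
  -- norm of w vs energy norm
  have hwn : Real.sqrt αa * ‖w‖ ≤ t := by
    have h1 : αa * ‖w‖ ^ 2 ≤ a w w := ha_coer w
    calc Real.sqrt αa * ‖w‖ = Real.sqrt (αa * ‖w‖ ^ 2) := by
          rw [Real.sqrt_mul hαa.le, Real.sqrt_sq (norm_nonneg w)]
      _ ≤ Real.sqrt (a w w) := Real.sqrt_le_sqrt h1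
  -- energy identity for w
  have hww : a w w = b w (p - qN) + a (u - vN) w := by
    have h1 : a uN w - a u w = b w p - b w pN := key w hwXN
    have h2 : b w (qN - pN) = 0 := hbw0 _ (sub_mem hqN hpN)
    have h3 : a w w = (a uN w - a u w) + a (u - vN) w := by
      simp only [hw, map_sub, LinearMap.sub_apply]; ring
    rw [h3, h1]
    have h4 : b w (p - qN) = b w p - b w qN := map_sub (b w) p qN
    have h5 : b w (qN - pN) = b w qN - b w pN := map_sub (b w) qN pN
    rw [h5] at h2
    rw [h4]; linarith
  -- bound on t
  have hRpos : 0 ≤ Real.sqrt γa * ‖u - vN‖ + γb / Real.sqrt αa * ‖p - qN‖ := by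
    positivity
  have htb : t ≤ Real.sqrt γa * ‖u - vN‖ + γb / Real.sqrt αa * ‖p - qN‖ := by
    have hsa : 0 < Real.sqrt αa := Real.sqrt_pos.mpr hαa
    have hb1 : b w (p - qN) ≤ γb * ‖w‖ * ‖p - qN‖ := hb_cont w (p - qN)
    have hb2 : a (u - vN) w ≤ (Real.sqrt γa * ‖u - vN‖) * t := by
      calc a (u - vN) w ≤ Real.sqrt (a (u - vN) (u - vN)) * Real.sqrt (a w w) :=
            acs (u - vN) w
        _ ≤ (Real.sqrt γa * ‖u - vN‖) * t := by
            exact mul_le_mul_of_nonneg_right (hdiag (u - vN)) ht0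
    have hwle : ‖w‖ ≤ t / Real.sqrt αa := by
      rw [le_div_iff₀ hsa]; nlinarith [hwn]
    have hfull : t * t ≤ (Real.sqrt γa * ‖u - vN‖ + γb / Real.sqrt αa * ‖p - qN‖) * t := by
      have hb1' : b w (p - qN) ≤ γb * (t / Real.sqrt αa) * ‖p - qN‖ := by
        have : γb * ‖w‖ * ‖p - qN‖ ≤ γb * (t / Real.sqrt αa) * ‖p - qN‖ := by
          have := mul_le_mul_of_nonneg_left hwle hγb.le
          exact mul_le_mul_of_nonneg_right this (norm_nonneg _)
        linarith
      rw [htsq, hww]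
      have : γb * (t / Real.sqrt αa) * ‖p - qN‖ = γb / Real.sqrt αa * ‖p - qN‖ * t := by
        field_simp
      nlinarith [hb1', hb2]
    rcases eq_or_lt_of_le ht0 with h | h
    · rw [← h]; exact hRpos
    · exact le_of_mul_le_mul_right (by nlinarith [hfull]) h
  -- bound the sup
  obtain ⟨C, hC⟩ : ∃ C : ℝ, C = γb * (1 + Real.sqrt (γa / αa)) * ‖p - qN‖ + 2 * γa * ‖u - vN‖ :=
    ⟨_, rfl⟩
  have hCpos : 0 ≤ C := by
    rw [hC]
    have h1 : (0:ℝ) ≤ Real.sqrt (γa / αa) := Real.sqrt_nonneg _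
    have h2 : (0:ℝ) ≤ ‖p - qN‖ := norm_nonneg _
    have h3 : (0:ℝ) ≤ ‖u - vN‖ := norm_nonneg _
    have h4 : (0:ℝ) ≤ γb * (1 + Real.sqrt (γa / αa)) * ‖p - qN‖ :=
      mul_nonneg (mul_nonneg hγb.le (by linarith)) h2
    have h5 : (0:ℝ) ≤ 2 * γa * ‖u - vN‖ := mul_nonneg (by linarith) h3
    linarith
  have hsqdiv : Real.sqrt (γa / αa) = Real.sqrt γa / Real.sqrt αa :=
    Real.sqrt_div hγa.le αa
  -- pointwise bound for v ∈ XN, v ≠ 0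
  have hptwise : ∀ v : {v : X // v ∈ XN ∧ v ≠ 0}, b v.1 (qN - pN) / ‖v.1‖ ≤ C := by
    intro v
    obtain ⟨hvm, hv0⟩ := v.2
    have hnv : 0 < ‖v.1‖ := norm_pos_iff.mpr hv0
    rw [div_le_iff₀ hnv]
    -- decomposition
    have hdec : b v.1 (qN - pN) = b v.1 (qN - p) + a w v.1 + a (vN - u) v.1 := by
      have h1 := key v.1 hvm
      have h2 : b v.1 (qN - pN) = b v.1 qN - b v.1 pN := map_sub (b v.1) qN pN
      have h3 : b v.1 (qN - p) = b v.1 qN - b v.1 p := map_sub (b v.1) qN p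
      have h4 : a w v.1 + a (vN - u) v.1 = a uN v.1 - a u v.1 := by
        simp only [hw, map_sub, LinearMap.sub_apply]; ring
      rw [h2, h3]; linarith [h1, h4]
    have hb1 : b v.1 (qN - p) ≤ γb * ‖p - qN‖ * ‖v.1‖ := by
      have := hb_cont v.1 (qN - p)
      rw [norm_sub_rev qN p] at this
      linarith [this]
    have hb3 : a (vN - u) v.1 ≤ γa * ‖u - vN‖ * ‖v.1‖ := by
      have := ha_cont (vN - u) v.1
      rw [norm_sub_rev vN u] at this
      linarith [this]
    have hb2 : a w v.1 ≤ (γa * ‖u - vN‖ + Real.sqrt γa * (γb / Real.sqrt αa) * ‖p - qN‖) * ‖v.1‖ := by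
      have hsa : 0 < Real.sqrt γa := Real.sqrt_pos.mpr hγa
      calc a w v.1 ≤ Real.sqrt (a w w) * Real.sqrt (a v.1 v.1) := acs w v.1
        _ ≤ t * (Real.sqrt γa * ‖v.1‖) := by
            exact mul_le_mul_of_nonneg_left (hdiag v.1) ht0
        _ ≤ (Real.sqrt γa * ‖u - vN‖ + γb / Real.sqrt αa * ‖p - qN‖) * (Real.sqrt γa * ‖v.1‖) := by
            apply mul_le_mul_of_nonneg_right htb
            positivity
        _ = (Real.sqrt γa * Real.sqrt γa * ‖u - vN‖ + Real.sqrt γa * (γb / Real.sqrt αa) * ‖p - qN‖) * ‖v.1‖ := by ring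
        _ = (γa * ‖u - vN‖ + Real.sqrt γa * (γb / Real.sqrt αa) * ‖p - qN‖) * ‖v.1‖ := by
            rw [Real.mul_self_sqrt hγa.le]
    have hCeq : C * ‖v.1‖ = γb * ‖p - qN‖ * ‖v.1‖ + γa * ‖u - vN‖ * ‖v.1‖
        + (γa * ‖u - vN‖ + Real.sqrt γa * (γb / Real.sqrt αa) * ‖p - qN‖) * ‖v.1‖ := by
        rw [hC, hsqdiv]; ring
    rw [hdec]
    linarith [hb1, hb2, hb3, hCeq.le, hCeq.ge]
  have hsup : βN * ‖qN - pN‖ ≤ C := by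
    rcases isEmpty_or_nonempty {v : X // v ∈ XN ∧ v ≠ 0} with hI | hI
    · have h1 := hinfsupN (qN - pN) (sub_mem hqN hpN)
      rw [Real.iSup_of_isEmpty] at h1
      linarith
    · exact le_trans (hinfsupN (qN - pN) (sub_mem hqN hpN)) (ciSup_le hptwise)
  have hqp : ‖qN - pN‖ ≤ C / βN := by
    rw [le_div_iff₀ hβN]; linarith [hsup]
  have htri : ‖p - pN‖ ≤ ‖p - qN‖ + ‖qN - pN‖ := by
    have : p - pN = (p - qN) + (qN - pN) := by abel
    rw [this]; exact norm_add_le _ _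
  calc ‖p - pN‖ ≤ ‖p - qN‖ + ‖qN - pN‖ := htri
    _ ≤ ‖p - qN‖ + C / βN := by linarith
    _ = (1 + (γb / βN) * (1 + Real.sqrt (γa / αa))) * ‖p - qN‖ + 2 * (γa / βN) * ‖u - vN‖ := by
        rw [hC]; ring
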